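/- Let ℓ ≥ 6 be an integer, let L be a finite triangle-free 4-sunspot-free graph, let H be a hole in L of length t ≥ ℓ such that no hole in L has length at least ℓ and strictly less than t, and let Φ be a full ℓ-safe H-flare in L; for each h ∈ V(H) write Φ(h) = {x_h}. Then for all distinct h, h' ∈ V(H), the vertex x_h is anticomplete to {h', x_{h'}} in L; consequently the subgraph of L induced on V(H) ∪ {x_h : h ∈ V(H)} is a t-sun. -/

import Mathlib

open SimpleGraph

/-- A `4`-sunspot in `G`: seven pairwise distinct vertices whose induced edge set is exactly
`{x₁x₂, x₂x₃, x₃x₄, x₄x₁, x₁y₁, x₂y₂, x₃y₃}`. -/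
def IsFourSunspot {V : Type} (G : SimpleGraph V) (x₁ x₂ x₃ x₄ y₁ y₂ y₃ : V) : Prop :=
  [x₁, x₂, x₃, x₄, y₁, y₂, y₃].Nodup ∧
  G.Adj x₁ x₂ ∧ G.Adj x₂ x₃ ∧ G.Adj x₃ x₄ ∧ G.Adj x₄ x₁ ∧
  G.Adj x₁ y₁ ∧ G.Adj x₂ y₂ ∧ G.Adj x₃ y₃ ∧
  ¬ G.Adj x₁ x₃ ∧ ¬ G.Adj x₂ x₄ ∧
  ¬ G.Adj x₁ y₂ ∧ ¬ G.Adj x₁ y₃ ∧ ¬ G.Adj x₂ y₁ ∧ ¬ G.Adj x₂ y₃ ∧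
  ¬ G.Adj x₃ y₁ ∧ ¬ G.Adj x₃ y₂ ∧ ¬ G.Adj x₄ y₁ ∧ ¬ G.Adj x₄ y₂ ∧ ¬ G.Adj x₄ y₃ ∧
  ¬ G.Adj y₁ y₂ ∧ ¬ G.Adj y₁ y₃ ∧ ¬ G.Adj y₂ y₃

/-- `G` is `4`-sunspot-free if there is no `4`-sunspot in `G`. -/
def FourSunspotFree {V : Type} (G : SimpleGraph V) : Prop :=
  ∀ x₁ x₂ x₃ x₄ y₁ y₂ y₃ : V, ¬ IsFourSunspot G x₁ x₂ x₃ x₄ y₁ y₂ y₃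

/-- The `t`-sun: a `t`-vertex cycle (on `Sum.inl` vertices) together with a pendant
(degree-one) neighbor `Sum.inr i` for each cycle vertex `Sum.inl i`. -/
def Sun (t : ℕ) : SimpleGraph (ZMod t ⊕ ZMod t) :=
  SimpleGraph.fromEdgeSet
    ((Set.range fun i : ZMod t => s(Sum.inl i, Sum.inl (i + 1))) ∪
     (Set.range fun i : ZMod t => s(Sum.inl i, Sum.inr i)))

/-- `G` is `t`-sun-free: no induced subgraph of `G` is a `t`-sun. -/
def SunFree (t : ℕ) {V : Type} (G : SimpleGraph V) : Prop :=
  IsEmpty (Sun t ↪g G)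

/-- The bull: a triangle `0,1,2` with pendant vertices `3` (adjacent to `0`)
and `4` (adjacent to `1`). -/
def Bull : SimpleGraph (Fin 5) :=
  SimpleGraph.fromEdgeSet {s(0, 1), s(1, 2), s(0, 2), s(0, 3), s(1, 4)}

/-- `G` is bull-free: no induced subgraph of `G` is a bull. -/
def BullFree {V : Type} (G : SimpleGraph V) : Prop :=
  IsEmpty (Bull ↪g G)

/-- A hole in `G`: an induced cycle on at least `4` vertices, given as a graph embedding
of the cycle graph. -/
structure Hole {V : Type} (G : SimpleGraph V) where
  len : ℕ
  four_le : 4 ≤ len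
  emb : SimpleGraph.cycleGraph len ↪g G

/-- The vertex set of a hole. -/
def Hole.verts {V : Type} {G : SimpleGraph V} (H : Hole G) : Set V :=
  Set.range H.emb

/-- The edge set of a hole. -/
def Hole.edges {V : Type} {G : SimpleGraph V} (H : Hole G) : Set (Sym2 V) :=
  {e | ∃ i j : Fin H.len, (SimpleGraph.cycleGraph H.len).Adj i j ∧ e = s(H.emb i, H.emb j)}

/-- `G` is liberal: for distinct non-adjacent `x, y`, neither dominates the other. -/
def Liberal {V : Type} (G : SimpleGraph V) : Prop :=
  ∀ x y : V, x ≠ y → ¬ G.Adj x y →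
    (G.neighborSet x \ G.neighborSet y).Nonempty ∧
    (G.neighborSet y \ G.neighborSet x).Nonempty

/-- `G` is non-degenerate: every vertex has degree at least `χ(G) - 1`. -/
def NonDegenerate {V : Type} (G : SimpleGraph V) : Prop :=
  ∀ v : V, G.chromaticNumber ≤ ((G.neighborSet v).ncard : ℕ∞) + 1

/-- `G` is flapless: for every hole `H` of length at least `6` in `G`, there is no `H`-flap,
i.e. no `4`-hole sharing an edge with `H`. -/
def Flapless {V : Type} (G : SimpleGraph V) : Prop :=
  ∀ H : Hole G, 6 ≤ H.len → ∀ F : Hole G, F.len = 4 → ∀ e ∈ F.edges, e ∉ H.edges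

/-- An `r`-leveling in `G`: pairwise disjoint nonempty sets `L 0, …, L r` such that every
vertex of `L i` (`i ≥ 1`) has a neighbor in `L (i-1)`, and edges only join consecutive levels. -/
def IsLeveling {V : Type} (G : SimpleGraph V) (r : ℕ) (L : ℕ → Set V) : Prop :=
  (∀ i, i ≤ r → (L i).Nonempty) ∧
  (∀ i j, i ≤ r → j ≤ r → i ≠ j → Disjoint (L i) (L j)) ∧
  (∀ i, 1 ≤ i → i ≤ r → ∀ v ∈ L i, ∃ u ∈ L (i - 1), G.Adj u v) ∧
  (∀ i j, i ≤ r → j ≤ r → i ≠ j →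
    ∀ u ∈ L i, ∀ v ∈ L j, G.Adj u v → i = j + 1 ∨ j = i + 1)

/-- `x` has no sector of length at most `2` in the hole `H`: there is no edge of `H` with both
ends adjacent to `x`, and no path of length `2` in `H` whose ends are adjacent to `x` and whose
middle vertex is not. -/
def NoSectorLenLe2 {V : Type} (G : SimpleGraph V) (H : Hole G) (x : V) : Prop :=
  (∀ i j : Fin H.len, (SimpleGraph.cycleGraph H.len).Adj i j →
      ¬ (G.Adj x (H.emb i) ∧ G.Adj x (H.emb j))) ∧
  (∀ i j k : Fin H.len, (SimpleGraph.cycleGraph H.len).Adj i j →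
      (SimpleGraph.cycleGraph H.len).Adj j k → i ≠ k →
      ¬ (G.Adj x (H.emb i) ∧ ¬ G.Adj x (H.emb j) ∧ G.Adj x (H.emb k)))

/-- `X` and `Y` are anticomplete in `G`: disjoint, with no edge between them. -/
def Anticomplete {V : Type} (G : SimpleGraph V) (X Y : Set V) : Prop :=
  Disjoint X Y ∧ ∀ x ∈ X, ∀ y ∈ Y, ¬ G.Adj x y

/-- An `H`-flare in `G`: to each vertex `H.emb i` of the hole `H`, assign a set `Φ i` of at
most one vertex, contained in the neighborhood of `H.emb i` and disjoint from `H`. -/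
structure IsFlare {V : Type} (G : SimpleGraph V) (H : Hole G) (Φ : Fin H.len → Set V) : Prop where
  subset_nbhd : ∀ i, Φ i ⊆ G.neighborSet (H.emb i) \ H.verts
  subsingleton : ∀ i, (Φ i).Subsingleton

/-- A flare is full if `|Φ i| = 1` for every `i`. -/
def IsFullFlare {V : Type} (G : SimpleGraph V) (H : Hole G) (Φ : Fin H.len → Set V) : Prop :=
  IsFlare G H Φ ∧ ∀ i, (Φ i).Nonempty

/-- A flare `Φ` is `d`-safe: for distinct hole vertices at distance at most `d` in `H`,
`Φ(h)` and `Φ[h'] = Φ(h') ∪ {h'}` are anticomplete in `G`. -/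
def DSafe {V : Type} (G : SimpleGraph V) (H : Hole G) (Φ : Fin H.len → Set V) (d : ℕ) : Prop :=
  ∀ i j : Fin H.len, i ≠ j → (SimpleGraph.cycleGraph H.len).dist i j ≤ d →
    Anticomplete G (Φ i) (Φ j ∪ {H.emb j})


open Fin.NatCast Fin.CommRing

section StmtSeventeenHelpers

open SimpleGraph

lemma my_natCast_inj {M : ℕ} [NeZero M] {u u' : ℕ} (hu : u < M) (hu' : u' < M)
    (h : (u : Fin M) = (u' : Fin M)) : u = u' := by
  have := congrArg Fin.val h
  rwa [Fin.val_natCast, Fin.val_natCast, Nat.mod_eq_of_lt hu, Nat.mod_eq_of_lt hu'] at this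

lemma my_cycAdj {q : ℕ} {k k' : Fin (q + 2)} :
    (cycleGraph (q + 2)).Adj k k' ↔ k' = k + 1 ∨ k = k' + 1 := by
  rw [cycleGraph_adj, sub_eq_iff_eq_add', sub_eq_iff_eq_add', or_comm]

lemma my_natCast_mod {M : ℕ} [NeZero M] (k : ℕ) : ((k % M : ℕ) : Fin M) = (k : Fin M) := by
  conv_rhs => rw [← Nat.mod_add_div k M]
  push_cast
  simp [Fin.natCast_self]

lemma my_castAddOne {q : ℕ} {u u' : ℕ} (hu : u < q + 2) (hu' : u' < q + 2) :
    (u' : Fin (q + 2)) = (u : Fin (q + 2)) + 1 ↔ (u' = u + 1 ∨ (u = q + 1 ∧ u' = 0)) := by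
  have h1 : ((u : Fin (q + 2)) + 1) = ((u + 1 : ℕ) : Fin (q + 2)) := by push_cast; ring
  rw [h1, Fin.ext_iff, Fin.val_natCast, Fin.val_natCast, Nat.mod_eq_of_lt hu']
  by_cases hq : u = q + 1
  · subst hq; rw [show q + 1 + 1 = q + 2 from rfl, Nat.mod_self]; omega
  · rw [Nat.mod_eq_of_lt (by omega)]; omega

lemma my_cycAdjNat {q u u' : ℕ} (hu : u < q + 2) (hu' : u' < q + 2) :
    (cycleGraph (q + 2)).Adj (u : Fin (q + 2)) (u' : Fin (q + 2)) ↔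
      (u' = u + 1 ∨ u = u' + 1 ∨ (u = q + 1 ∧ u' = 0) ∨ (u' = q + 1 ∧ u = 0)) := by
  rw [my_cycAdj, my_castAddOne hu hu', my_castAddOne hu' hu]; tauto

lemma my_dist_le {q : ℕ} (i : Fin (q + 2)) (d : ℕ) :
    (cycleGraph (q + 2)).dist i (i + (d : Fin (q + 2))) ≤ d := by
  induction d with
  | zero => simp
  | succ d ih =>
    have hadj : (cycleGraph (q + 2)).Adj (i + (d : Fin (q + 2)))
        (i + ((d + 1 : ℕ) : Fin (q + 2))) := by
      rw [my_cycAdj]; left; push_cast; ring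
    have h2 := SimpleGraph.dist_le (Walk.cons hadj Walk.nil)
    simp only [Walk.length_cons, Walk.length_nil] at h2
    calc (cycleGraph (q + 2)).dist i (i + ((d + 1 : ℕ) : Fin (q + 2)))
        ≤ _ + _ := Connected.dist_triangle cycleGraph_connected (v := i + (d : Fin (q + 2)))
      _ ≤ d + 1 := by omega

lemma my_offset {q : ℕ} {i j : Fin (q + 2)} (hij : i ≠ j) :
    ∃ d : ℕ, 1 ≤ d ∧ d < q + 2 ∧ j = i + (d : Fin (q + 2)) ∧
      (cycleGraph (q + 2)).dist i j ≤ d ∧ (cycleGraph (q + 2)).dist i j ≤ q + 2 - d := by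
  set d := (j - i).val with hd
  have hlt : d < q + 2 := (j - i).isLt
  have h1 : 1 ≤ d := by
    have hne : j - i ≠ 0 := sub_ne_zero_of_ne hij.symm
    have hdne : d ≠ 0 := by intro h0; exact hne (Fin.ext (by rw [← hd, h0]; rfl))
    omega
  have hj : j = i + (d : Fin (q + 2)) := by rw [hd, Fin.cast_val_eq_self]; ring
  have hcast : ((q + 2 - d : ℕ) : Fin (q + 2)) + ((d : ℕ) : Fin (q + 2)) = 0 := by
    rw [← Nat.cast_add, Nat.sub_add_cancel (le_of_lt hlt)]
    exact Fin.natCast_self _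
  have hi : i = j + ((q + 2 - d : ℕ) : Fin (q + 2)) := by
    rw [hj, add_assoc, add_comm ((d : ℕ) : Fin (q + 2)), hcast, add_zero]
  refine ⟨d, h1, hlt, hj, ?_, ?_⟩
  · conv_lhs => rw [hj]
    exact my_dist_le i d
  · rw [SimpleGraph.dist_comm]
    conv_lhs => rw [hi]
    exact my_dist_le j _

def myPhi (m : ℕ) (z : ZMod (m + 2)) : Fin (m + 2) := ((z.val : ℕ) : Fin (m + 2))

lemma myPhi_add_one {m : ℕ} (z : ZMod (m + 2)) : myPhi m (z + 1) = myPhi m z + 1 := by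
  haveI : Fact (1 < m + 2) := ⟨by omega⟩
  unfold myPhi
  rw [ZMod.val_add, ZMod.val_one, my_natCast_mod]
  push_cast
  ring

lemma myPhi_inj {m : ℕ} : Function.Injective (myPhi m) := fun z w h =>
  ZMod.val_injective _ (my_natCast_inj (ZMod.val_lt z) (ZMod.val_lt w) h)

lemma myPhi_surj {m : ℕ} : Function.Surjective (myPhi m) := by
  intro k
  refine ⟨((k.val : ℕ) : ZMod (m + 2)), ?_⟩
  unfold myPhi
  rw [ZMod.val_natCast, my_natCast_mod, Fin.cast_val_eq_self]

lemma my_zmod_ne_add_one {m : ℕ} (z : ZMod (m + 2)) : z ≠ z + 1 := by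
  haveI : Fact (1 < m + 2) := ⟨by omega⟩
  intro h
  have h2 : z + 0 = z + 1 := by rw [add_zero]; exact h
  exact zero_ne_one (add_left_cancel h2)

lemma my_cyc_phi {m : ℕ} (z w : ZMod (m + 2)) :
    (cycleGraph (m + 2)).Adj (myPhi m z) (myPhi m w) ↔ (w = z + 1 ∨ z = w + 1) := by
  rw [my_cycAdj, ← myPhi_add_one z, ← myPhi_add_one w, myPhi_inj.eq_iff, myPhi_inj.eq_iff]

lemma my_sun_ll {m : ℕ} (z w : ZMod (m + 2)) :
    (Sun (m + 2)).Adj (Sum.inl z) (Sum.inl w) ↔ ((w = z + 1 ∨ z = w + 1) ∧ z ≠ w) := by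
  simp only [Sun, fromEdgeSet_adj, Set.mem_union, Set.mem_range, Sym2.eq, Sym2.rel_iff',
    Prod.mk.injEq, Prod.swap_prod_mk, Sum.inl.injEq, ne_eq, reduceCtorEq, and_false, false_and,
    or_false]
  constructor
  · rintro ⟨(⟨i, (⟨rfl, rfl⟩ | ⟨rfl, rfl⟩)⟩ | ⟨i, hF, -⟩), hne⟩
    · exact ⟨Or.inl rfl, hne⟩
    · exact ⟨Or.inr rfl, hne⟩
  · rintro ⟨(rfl | rfl), hne⟩
    · exact ⟨Or.inl ⟨z, Or.inl ⟨rfl, rfl⟩⟩, hne⟩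
    · exact ⟨Or.inl ⟨w, Or.inr ⟨rfl, rfl⟩⟩, hne⟩

lemma my_sun_lr {m : ℕ} (z w : ZMod (m + 2)) :
    (Sun (m + 2)).Adj (Sum.inl z) (Sum.inr w) ↔ z = w := by
  simp only [Sun, fromEdgeSet_adj, Set.mem_union, Set.mem_range, Sym2.eq, Sym2.rel_iff',
    Prod.mk.injEq, Prod.swap_prod_mk, Sum.inl.injEq, Sum.inr.injEq, ne_eq, reduceCtorEq,
    and_false, false_and, or_false, false_or, and_true, not_false_iff]
  simp

lemma my_sun_rr {m : ℕ} (z w : ZMod (m + 2)) :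
    ¬ (Sun (m + 2)).Adj (Sum.inr z) (Sum.inr w) := by
  simp only [Sun, fromEdgeSet_adj, Set.mem_union, Set.mem_range, Sym2.eq, Sym2.rel_iff',
    Prod.mk.injEq, Prod.swap_prod_mk, ne_eq, reduceCtorEq, and_false, false_and, or_false,
    false_or, or_self, not_and]
  simp

end StmtSeventeenHelpers

/-- Let `ℓ ≥ 6`, let `L` be a finite triangle-free `4`-sunspot-free graph,
let `H` be a hole in `L` of length `t ≥ ℓ` that is shortest among holes of length at least
`ℓ`, and let `Φ` be a full `ℓ`-safe `H`-flare with `Φ i = {x i}`. Then for all distinct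
`i, j`, the vertex `x i` is anticomplete to `{H.emb j, x j}` in `L`; consequently the
subgraph of `L` induced on `V(H) ∪ {x i : i}` is a `t`-sun. -/
theorem stmt_17 {V : Type} [Fintype V] (l : ℕ) (hl : 6 ≤ l) (L : SimpleGraph V)
    (htri : L.CliqueFree 3)
    (hspot : FourSunspotFree L)
    (H : Hole L) (hHlen : l ≤ H.len)
    (hshortest : ∀ H' : Hole L, l ≤ H'.len → H.len ≤ H'.len)
    (Φ : Fin H.len → Set V) (hΦ : IsFlare L H Φ) (hsafe : DSafe L H Φ l)
    (x : Fin H.len → V) (hx : ∀ i, Φ i = {x i}) :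
    (∀ i j : Fin H.len, i ≠ j → Anticomplete L {x i} {H.emb j, x j}) ∧
    ∃ e : Sun H.len ↪g L, Set.range e = H.verts ∪ Set.range x := by
    classical
  obtain ⟨t, ht4, emb⟩ := H
  replace hHlen : l ≤ t := hHlen
  obtain ⟨m, rfl⟩ : ∃ m, t = m + 2 := ⟨t - 2, by omega⟩
  -- basic flare facts
  have hxmem : ∀ i : Fin (m + 2), x i ∈ Φ i := fun i => by rw [hx i]; rfl
  have hnb : ∀ i : Fin (m + 2), x i ∈ L.neighborSet (emb i) \ Set.range emb :=
    fun i => hΦ.subset_nbhd i (hxmem i)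
  have hadjx : ∀ i, L.Adj (emb i) (x i) := fun i => (hnb i).1
  have hxnotH : ∀ i, x i ∉ Set.range emb := fun i => (hnb i).2
  have hxny : ∀ i j, x i ≠ emb j := fun i j h => hxnotH i ⟨j, h.symm⟩
  -- safety, reformulated
  have safe : ∀ i j : Fin (m + 2), i ≠ j → (cycleGraph (m + 2)).dist i j ≤ l →
      ¬ L.Adj (x i) (x j) ∧ ¬ L.Adj (x i) (emb j) := by
    intro i j hij hd
    have h := hsafe i j hij hd
    exact ⟨h.2 (x i) (hxmem i) (x j) (Set.mem_union_left _ (hxmem j)),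
      h.2 (x i) (hxmem i) (emb j) (Set.mem_union_right _ rfl)⟩
  -- any adjacency from x i into the far zone gives a long offset
  have adjFarX : ∀ i j : Fin (m + 2), i ≠ j → (L.Adj (x i) (emb j) ∨ L.Adj (x i) (x j)) →
      ∃ d : ℕ, l + 1 ≤ d ∧ d + l + 1 ≤ m + 2 ∧ j = i + (d : Fin (m + 2)) := by
    intro i j hij hadj
    obtain ⟨d, h1, h2, hjd, hd1, hd2⟩ := my_offset hij
    by_cases hdist : (cycleGraph (m + 2)).dist i j ≤ l
    · rcases hadj with h | h
      · exact absurd h (safe i j hij hdist).2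
      · exact absurd h (safe i j hij hdist).1
    · exact ⟨d, by omega, by omega, hjd⟩
  -- cast helpers
  have keyEq : ∀ (i : Fin (m + 2)) (u u' : ℕ), u < m + 2 → u' < m + 2 →
      ((i + (u : Fin (m + 2)) = i + (u' : Fin (m + 2))) ↔ u = u') := by
    intro i u u' hu hu'
    rw [add_right_inj]
    exact ⟨fun h => my_natCast_inj hu hu' h, fun h => by rw [h]⟩
  have keyS : ∀ (i : Fin (m + 2)) (u u' : ℕ), u ≤ m → u' ≤ m + 1 →
      ((i + (u' : Fin (m + 2)) = i + (u : Fin (m + 2)) + 1) ↔ u' = u + 1) := by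
    intro i u u' hu hu'
    rw [add_assoc, add_right_inj,
      show ((u : Fin (m + 2)) + 1) = ((u + 1 : ℕ) : Fin (m + 2)) by push_cast; ring]
    exact ⟨fun h => my_natCast_inj (by omega) (by omega) h, fun h => by rw [h]⟩
  have hne0 : ∀ (i : Fin (m + 2)) (u : ℕ), 1 ≤ u → u < m + 2 →
      i ≠ i + (u : Fin (m + 2)) := by
    intro i u h1 h2 h
    have h0 : i + ((0 : ℕ) : Fin (m + 2)) = i + (u : Fin (m + 2)) := by
      rw [Nat.cast_zero, add_zero]; exact h
    have := (keyEq i 0 u (by omega) h2).mp h0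
    omega
  have hembAdj : ∀ (i : Fin (m + 2)) (u u' : ℕ), u ≤ m → u' ≤ m →
      (L.Adj (emb (i + (u : Fin (m + 2)))) (emb (i + (u' : Fin (m + 2)))) ↔
        (u' = u + 1 ∨ u = u' + 1)) := by
    intro i u u' hu hu'
    rw [emb.map_rel_iff, my_cycAdj, keyS i u u' hu (by omega), keyS i u' u hu' (by omega)]
  -- Step A : no far adjacency from x i to the hole
  have stepA : ∀ i j : Fin (m + 2), i ≠ j → ¬ L.Adj (x i) (emb j) := by
    intro i j hij hadj
    obtain ⟨d0, hd01, hd02, hjd0⟩ := adjFarX i j hij (Or.inl hadj)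
    have hP : ∃ d : ℕ, 1 ≤ d ∧ d + l + 1 ≤ m + 2 ∧
        L.Adj (x i) (emb (i + (d : Fin (m + 2)))) :=
      ⟨d0, by omega, by omega, by rw [← hjd0]; exact hadj⟩
    obtain ⟨a, ⟨ha1, ham, haadj⟩, hminR⟩ : ∃ a, (1 ≤ a ∧ a + l + 1 ≤ m + 2 ∧
        L.Adj (x i) (emb (i + (a : Fin (m + 2))))) ∧ ∀ u < a, ¬(1 ≤ u ∧ u + l + 1 ≤ m + 2 ∧
        L.Adj (x i) (emb (i + (u : Fin (m + 2))))) :=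
      ⟨Nat.find hP, Nat.find_spec hP, fun u hu => Nat.find_min hP hu⟩
    have hmin : ∀ u, 1 ≤ u → u < a → ¬ L.Adj (x i) (emb (i + (u : Fin (m + 2)))) := by
      intro u h1 hu hadj'
      exact hminR u hu ⟨h1, by omega, hadj'⟩
    have hane : i ≠ i + (a : Fin (m + 2)) := hne0 i a (by omega) (by omega)
    obtain ⟨d1, hd11, hd12, hd13⟩ :=
      adjFarX i (i + (a : Fin (m + 2))) hane (Or.inl haadj)
    have had1 : a = d1 := (keyEq i a d1 (by omega) (by omega)).mp hd13
    have hal : l + 1 ≤ a := by omega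
    -- the sector hole of length a + 2
    set f : Fin (a + 2) → V := fun k =>
      if (k : ℕ) ≤ a then emb (i + (((k : ℕ) : ℕ) : Fin (m + 2))) else x i with hf
    have hfval : ∀ k : Fin (a + 2),
        ((k : ℕ) ≤ a ∧ f k = emb (i + (((k : ℕ) : ℕ) : Fin (m + 2)))) ∨
        ((k : ℕ) = a + 1 ∧ f k = x i) := by
      intro k
      by_cases hk : (k : ℕ) ≤ a
      · left; refine ⟨hk, ?_⟩; rw [hf]; dsimp only; rw [if_pos hk]
      · right; refine ⟨by have := k.isLt; omega, ?_⟩; rw [hf]; dsimp only; rw [if_neg hk]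
    have hxadjU : ∀ u : ℕ, u ≤ a →
        (L.Adj (x i) (emb (i + (u : Fin (m + 2)))) ↔ (u = 0 ∨ u = a)) := by
      intro u hu
      constructor
      · intro h
        by_contra hc
        push_neg at hc
        exact hmin u (by omega) (by omega) h
      · rintro (rfl | rfl)
        · simpa using (hadjx i).symm
        · exact haadj
    have hinj : Function.Injective f := by
      intro k k' hkk
      rcases hfval k with ⟨hk, ek⟩ | ⟨hk, ek⟩ <;> rcases hfval k' with ⟨hk', ek'⟩ | ⟨hk', ek'⟩
      · rw [ek, ek'] at hkk
        have := (keyEq i _ _ (by omega) (by omega)).mp (emb.injective hkk)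
        exact Fin.ext this
      · rw [ek, ek'] at hkk
        exact absurd ⟨_, hkk⟩ (hxnotH i)
      · rw [ek, ek'] at hkk
        exact absurd ⟨_, hkk.symm⟩ (hxnotH i)
      · exact Fin.ext (by omega)
    have hiff : ∀ k k' : Fin (a + 2), L.Adj (f k) (f k') ↔ (cycleGraph (a + 2)).Adj k k' := by
      intro k k'
      have hR : (cycleGraph (a + 2)).Adj k k' ↔
          ((k' : ℕ) = (k : ℕ) + 1 ∨ (k : ℕ) = (k' : ℕ) + 1 ∨
            ((k : ℕ) = a + 1 ∧ (k' : ℕ) = 0) ∨ ((k' : ℕ) = a + 1 ∧ (k : ℕ) = 0)) := by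
        conv_lhs => rw [← Fin.cast_val_eq_self k, ← Fin.cast_val_eq_self k']
        exact my_cycAdjNat k.isLt k'.isLt
      rw [hR]
      rcases hfval k with ⟨hk, ek⟩ | ⟨hk, ek⟩ <;>
        rcases hfval k' with ⟨hk', ek'⟩ | ⟨hk', ek'⟩ <;> rw [ek, ek']
      · rw [hembAdj i _ _ (by omega) (by omega)]
        omega
      · rw [L.adj_comm, hxadjU _ hk]
        omega
      · rw [hxadjU _ hk']
        omega
      · constructor
        · intro h; exact (h.ne rfl).elim
        · intro h; exfalso; omega
    have hcontr : m + 2 ≤ a + 2 :=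
      hshortest ⟨a + 2, by omega, ⟨⟨f, hinj⟩, fun {k k'} => hiff k k'⟩⟩
        (show l ≤ a + 2 by omega)
    omega
  have hxne : ∀ i j : Fin (m + 2), i ≠ j → x i ≠ x j := by
    intro i j hij h
    exact stepA i j hij (by rw [h]; exact (hadjx j).symm)
  -- Step B : no far adjacency between flare tips
  have noXX : ∀ i j : Fin (m + 2), i ≠ j → ¬ L.Adj (x i) (x j) := by
    intro i j hij hadj
    obtain ⟨d, hd1, hd2, hjd⟩ := adjFarX i j hij (Or.inr hadj)
    obtain ⟨a, ha⟩ : ∃ a, a = d + 1 := ⟨d + 1, rfl⟩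
    have hxj : ∀ u : ℕ, u ≤ d → (L.Adj (x j) (emb (i + (u : Fin (m + 2)))) ↔ u = d) := by
      intro u hu
      constructor
      · intro h
        by_contra hne
        refine stepA j (i + (u : Fin (m + 2))) ?_ h
        intro he
        rw [hjd] at he
        exact hne ((keyEq i d u (by omega) (by omega)).mp he).symm
      · rintro rfl
        rw [← hjd]
        exact (hadjx j).symm
    have hxi0 : ∀ u : ℕ, u ≤ d → (L.Adj (x i) (emb (i + (u : Fin (m + 2)))) ↔ u = 0) := by
      intro u hu
      constructor
      · intro h
        by_contra hne
        exact stepA i (i + (u : Fin (m + 2))) (hne0 i u (by omega) (by omega)) h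
      · rintro rfl
        simpa using (hadjx i).symm
    set f : Fin (a + 2) → V := fun k =>
      if (k : ℕ) ≤ d then emb (i + (((k : ℕ) : ℕ) : Fin (m + 2)))
      else if (k : ℕ) = d + 1 then x j else x i with hf
    have hfval : ∀ k : Fin (a + 2),
        ((k : ℕ) ≤ d ∧ f k = emb (i + (((k : ℕ) : ℕ) : Fin (m + 2)))) ∨
        ((k : ℕ) = d + 1 ∧ f k = x j) ∨ ((k : ℕ) = d + 2 ∧ f k = x i) := by
      intro k
      by_cases hk : (k : ℕ) ≤ d
      · left; refine ⟨hk, ?_⟩; rw [hf]; dsimp only; rw [if_pos hk]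
      · by_cases hk2 : (k : ℕ) = d + 1
        · right; left; refine ⟨hk2, ?_⟩; rw [hf]; dsimp only; rw [if_neg hk, if_pos hk2]
        · right; right
          refine ⟨by have := k.isLt; omega, ?_⟩
          rw [hf]; dsimp only; rw [if_neg hk, if_neg hk2]
    have hinj : Function.Injective f := by
      intro k k' hkk
      rcases hfval k with ⟨hk, ek⟩ | ⟨hk, ek⟩ | ⟨hk, ek⟩ <;>
        rcases hfval k' with ⟨hk', ek'⟩ | ⟨hk', ek'⟩ | ⟨hk', ek'⟩ <;> rw [ek, ek'] at hkk
      · have := (keyEq i _ _ (by omega) (by omega)).mp (emb.injective hkk)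
        exact Fin.ext (by omega)
      · exact absurd ⟨_, hkk⟩ (hxnotH j)
      · exact absurd ⟨_, hkk⟩ (hxnotH i)
      · exact absurd ⟨_, hkk.symm⟩ (hxnotH j)
      · exact Fin.ext (by omega)
      · exact absurd hkk (hxne j i hij.symm)
      · exact absurd ⟨_, hkk.symm⟩ (hxnotH i)
      · exact absurd hkk.symm (hxne j i hij.symm)
      · exact Fin.ext (by omega)
    have hiff : ∀ k k' : Fin (a + 2), L.Adj (f k) (f k') ↔ (cycleGraph (a + 2)).Adj k k' := by
      intro k k'
      have hR : (cycleGraph (a + 2)).Adj k k' ↔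
          ((k' : ℕ) = (k : ℕ) + 1 ∨ (k : ℕ) = (k' : ℕ) + 1 ∨
            ((k : ℕ) = a + 1 ∧ (k' : ℕ) = 0) ∨ ((k' : ℕ) = a + 1 ∧ (k : ℕ) = 0)) := by
        conv_lhs => rw [← Fin.cast_val_eq_self k, ← Fin.cast_val_eq_self k']
        exact my_cycAdjNat k.isLt k'.isLt
      rw [hR]
      rcases hfval k with ⟨hk, ek⟩ | ⟨hk, ek⟩ | ⟨hk, ek⟩ <;>
        rcases hfval k' with ⟨hk', ek'⟩ | ⟨hk', ek'⟩ | ⟨hk', ek'⟩ <;> rw [ek, ek']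
      · rw [hembAdj i _ _ (by omega) (by omega)]
        omega
      · rw [L.adj_comm, hxj _ hk]
        omega
      · rw [L.adj_comm, hxi0 _ hk]
        omega
      · rw [hxj _ hk']
        omega
      · constructor
        · intro h; exact (h.ne rfl).elim
        · intro h; exfalso; omega
      · constructor
        · intro _; omega
        · intro _; exact hadj.symm
      · rw [hxi0 _ hk']
        omega
      · constructor
        · intro _; omega
        · intro _; exact hadj
      · constructor
        · intro h; exact (h.ne rfl).elim
        · intro h; exfalso; omega
    have hcontr : m + 2 ≤ a + 2 :=
      hshortest ⟨a + 2, by omega, ⟨⟨f, hinj⟩, fun {k k'} => hiff k k'⟩⟩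
        (show l ≤ a + 2 by omega)
    omega
  -- first conclusion
  have anticompl : ∀ i j : Fin (m + 2), i ≠ j → Anticomplete L {x i} {emb j, x j} := by
    intro i j hij
    constructor
    · rw [Set.disjoint_singleton_left]
      intro h
      rcases h with h | h
      · exact hxny i j h
      · exact hxne i j hij h
    · intro p hp q hq hadj
      simp only [Set.mem_singleton_iff] at hp
      simp only [Set.mem_insert_iff, Set.mem_singleton_iff] at hq
      subst hp
      rcases hq with rfl | rfl
      · exact stepA i j hij hadj
      · exact noXX i j hij hadj
  refine ⟨anticompl, ?_⟩
  -- the sun embedding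
  haveI : Fact (1 < m + 2) := ⟨by omega⟩
  set e : ZMod (m + 2) ⊕ ZMod (m + 2) → V :=
    Sum.elim (fun z => emb (myPhi m z)) (fun z => x (myPhi m z)) with he
  have heinj : Function.Injective e := by
    rintro (z | z) (w | w) h <;> simp only [he, Sum.elim_inl, Sum.elim_inr] at h
    · exact congrArg Sum.inl (myPhi_inj (emb.injective h))
    · exact absurd ⟨_, h⟩ (hxnotH _)
    · exact absurd ⟨_, h.symm⟩ (hxnotH _)
    · by_cases hzw : myPhi m z = myPhi m w
      · exact congrArg Sum.inr (myPhi_inj hzw)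
      · exact absurd h (hxne _ _ hzw)
  have hiff : ∀ u v, L.Adj (e u) (e v) ↔ (Sun (m + 2)).Adj u v := by
    rintro (z | z) (w | w) <;> simp only [he, Sum.elim_inl, Sum.elim_inr]
    · rw [my_sun_ll, emb.map_rel_iff, my_cyc_phi]
      constructor
      · intro h
        refine ⟨h, ?_⟩
        rintro rfl
        rcases h with h | h
        · exact my_zmod_ne_add_one z h
        · exact my_zmod_ne_add_one z h
      · exact fun h => h.1
    · rw [my_sun_lr]
      constructor
      · intro h
        by_contra hzw
        exact stepA (myPhi m w) (myPhi m z)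
          (fun hh => hzw (myPhi_inj hh).symm) h.symm
      · rintro rfl
        exact hadjx _
    · rw [L.adj_comm, (Sun (m + 2)).adj_comm, my_sun_lr]
      constructor
      · intro h
        by_contra hzw
        exact stepA (myPhi m z) (myPhi m w)
          (fun hh => hzw (myPhi_inj hh).symm) h.symm
      · rintro rfl
        exact hadjx _
    · constructor
      · intro h
        by_cases hzw : myPhi m z = myPhi m w
        · rw [hzw] at h
          exact (h.ne rfl).elim
        · exact ((noXX _ _ hzw) h).elim
      · intro h
        exact (my_sun_rr z w h).elim
  have hrange : Set.range e = Set.range emb ∪ Set.range x := by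
    rw [he, Set.Sum.elim_range]
    congr 1
    · ext v
      constructor
      · rintro ⟨z, rfl⟩; exact ⟨myPhi m z, rfl⟩
      · rintro ⟨k, rfl⟩
        obtain ⟨z, hz⟩ := myPhi_surj k
        exact ⟨z, by dsimp only; rw [hz]⟩
    · ext v
      constructor
      · rintro ⟨z, rfl⟩; exact ⟨myPhi m z, rfl⟩
      · rintro ⟨k, rfl⟩
        obtain ⟨z, hz⟩ := myPhi_surj k
        exact ⟨z, by dsimp only; rw [hz]⟩
  exact ⟨⟨⟨e, heinj⟩, fun {u v} => hiff u v⟩, hrange⟩
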